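/- Let X be a Hausdorff space that is locally compact, countably tight, linearly H-closed and not compact. Then X contains an open set U that is σ-compact (a countable union of compact sets) and whose closure, with the subspace topology, is linearly H-closed and not Lindelöf. -/

import Mathlib

/-- A space is *linearly H-closed* if every cover by open sets that is linearly
ordered by inclusion (a chain cover) has a member that is dense in the space. -/
def LinearlyHClosed (X : Type*) [TopologicalSpace X] : Prop :=
  ∀ C : Set (Set X), (∀ U ∈ C, IsOpen U) → ⋃₀ C = Set.univ → IsChain (· ⊆ ·) C →
    ∃ U ∈ C, Dense U

/-- A space is *countably tight* if for every subset `E` and every point `x` in the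
closure of `E` there is a countable subset `A ⊆ E` with `x` in the closure of `A`. -/
def CountablyTight (X : Type*) [TopologicalSpace X] : Prop :=
  ∀ (E : Set X) (x : X), x ∈ closure E →
    ∃ A ⊆ E, A.Countable ∧ x ∈ closure A

open Set

section Aux

variable {X : Type*} [TopologicalSpace X]

/-- A set is *nice* if it is the increasing union of a sequence of open sets whose
closures are compact and nested into the next member. -/
def NiceSet (U : Set X) : Prop :=
  ∃ g : ℕ → Set X, (∀ n, IsOpen (g n)) ∧ (∀ n, IsCompact (closure (g n))) ∧
    (∀ n, closure (g n) ⊆ g (n + 1)) ∧ U = ⋃ n, g n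

lemma NiceSet.isOpen {U : Set X} (h : NiceSet U) : IsOpen U := by
  obtain ⟨g, hgo, -, -, rfl⟩ := h
  exact isOpen_iUnion hgo

lemma NiceSet.isSigmaCompact {U : Set X} (h : NiceSet U) : IsSigmaCompact U := by
  obtain ⟨g, -, hgc, hgs, rfl⟩ := h
  refine ⟨fun n => closure (g n), hgc, ?_⟩
  apply subset_antisymm
  · exact iUnion_subset fun n => (hgs n).trans (subset_iUnion g (n + 1))
  · exact iUnion_subset fun n => subset_closure.trans (subset_iUnion (fun n => closure (g n)) n)

lemma niceSet_empty : NiceSet (∅ : Set X) :=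
  ⟨fun _ => ∅, fun _ => isOpen_empty, fun _ => by simp, fun _ => by simp, by simp⟩

/-- Countable unions of nice sets are nice. -/
lemma niceSet_iUnion {ι : Type*} [Countable ι] {f : ι → Set X}
    (hf : ∀ i, NiceSet (f i)) : NiceSet (⋃ i, f i) := by
  cases isEmpty_or_nonempty ι
  · simpa [iUnion_of_empty] using niceSet_empty
  obtain ⟨e, he⟩ := exists_surjective_nat ι
  choose g hgo hgc hgs hgU using hf
  refine ⟨fun k => ⋃ n ≤ k, ⋃ m ≤ k, g (e n) m, ?_, ?_, ?_, ?_⟩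
  · intro k
    exact isOpen_biUnion fun n _ => isOpen_biUnion fun m _ => hgo _ _
  · intro k
    rw [closure_iUnion₂_le_nat]
    refine (finite_le_nat k).isCompact_biUnion fun n _ => ?_
    rw [closure_iUnion₂_le_nat]
    exact (finite_le_nat k).isCompact_biUnion fun m _ => hgc _ _
  · intro k
    rw [closure_iUnion₂_le_nat]
    refine iUnion₂_subset fun n hn => ?_
    rw [closure_iUnion₂_le_nat]
    refine iUnion₂_subset fun m hm => ?_
    refine subset_trans (hgs (e n) m) ?_
    exact subset_iUnion₂_of_subset n (hn.trans (Nat.le_succ k))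
      (subset_iUnion₂_of_subset (m + 1) (Nat.succ_le_succ hm) subset_rfl)
  · apply subset_antisymm
    · refine iUnion_subset fun i => ?_
      obtain ⟨n, rfl⟩ := he i
      rw [hgU]
      refine iUnion_subset fun m => ?_
      refine subset_trans ?_ (subset_iUnion _ (max n m))
      exact subset_iUnion₂_of_subset n (le_max_left n m)
        (subset_iUnion₂_of_subset m (le_max_right n m) subset_rfl)
    · refine iUnion_subset fun k => ?_
      refine iUnion₂_subset fun n _ => iUnion₂_subset fun m _ => ?_
      refine subset_trans ?_ (subset_iUnion f (e n))
      rw [hgU]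
      exact subset_iUnion _ m

variable [T2Space X] [WeaklyLocallyCompactSpace X]

/-- In a locally compact Hausdorff space, every compact set is contained in an open
set with compact closure. -/
lemma exists_open_compactClosure {K : Set X} (hK : IsCompact K) :
    ∃ V, IsOpen V ∧ K ⊆ V ∧ IsCompact (closure V) := by
  obtain ⟨K', hK'c, hKK'⟩ := exists_compact_superset hK
  refine ⟨interior K', isOpen_interior, hKK', ?_⟩
  exact hK'c.of_isClosed_subset isClosed_closure
    (closure_minimal interior_subset hK'c.isClosed)

/-- Every Lindelöf subset of a locally compact Hausdorff space is contained in a nice set. -/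
lemma exists_niceSet_superset {L : Set X} (hL : IsLindelof L) :
    ∃ U, NiceSet U ∧ L ⊆ U := by
  choose K hKc hKn using fun x : X => exists_compact_mem_nhds x
  have hmem : ∀ x ∈ L, interior (K x) ∈ nhds x := fun x _ =>
    interior_mem_nhds.mpr (hKn x)
  obtain ⟨t, htc, -, htL⟩ := hL.elim_nhds_subcover (fun x => interior (K x)) hmem
  rcases t.eq_empty_or_nonempty with rfl | hne
  · exact ⟨∅, niceSet_empty, by simpa using htL⟩
  obtain ⟨e, he⟩ := htc.exists_eq_range hne
  -- a total "thickening" function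
  have hbig : ∀ S : Set X, ∃ V, IsOpen V ∧
      (IsCompact (closure S) → closure S ⊆ V ∧ IsCompact (closure V)) := by
    intro S
    by_cases h : IsCompact (closure S)
    · obtain ⟨V, hVo, hSV, hVc⟩ := exists_open_compactClosure h
      exact ⟨V, hVo, fun _ => ⟨hSV, hVc⟩⟩
    · exact ⟨∅, isOpen_empty, fun hc => absurd hc h⟩
  choose big hbo hbs using hbig
  set g : ℕ → Set X := fun n =>
    Nat.rec (interior (K (e 0))) (fun n gn => interior (K (e (n + 1))) ∪ big gn) n with hg
  have hbase : ∀ x : X, IsCompact (closure (interior (K x))) := fun x =>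
    (hKc x).of_isClosed_subset isClosed_closure
      (closure_minimal interior_subset (hKc x).isClosed)
  have hgc : ∀ n, IsCompact (closure (g n)) := by
    intro n
    induction n with
    | zero => exact hbase _
    | succ n ih =>
      show IsCompact (closure (interior (K (e (n + 1))) ∪ big (g n)))
      rw [closure_union]
      exact (hbase _).union ((hbs (g n) ih).2)
  have hgo : ∀ n, IsOpen (g n) := by
    intro n
    induction n with
    | zero => exact isOpen_interior
    | succ n _ => exact isOpen_interior.union (hbo (g n))
  have hgs : ∀ n, closure (g n) ⊆ g (n + 1) := by
    intro n
    exact ((hbs (g n) (hgc n)).1).trans subset_union_right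
  refine ⟨⋃ n, g n, ⟨g, hgo, hgc, hgs, rfl⟩, ?_⟩
  refine htL.trans (iUnion₂_subset fun x hx => ?_)
  rw [he] at hx
  obtain ⟨n, rfl⟩ := hx
  refine subset_trans ?_ (subset_iUnion g n)
  cases n with
  | zero => exact subset_rfl
  | succ n => exact subset_union_left

/-- In a linearly H-closed, noncompact, locally compact Hausdorff space,
the whole space is not Lindelöf. -/
lemma not_isLindelof_univ (hX : LinearlyHClosed X) (hnc : ¬ CompactSpace X) :
    ¬ IsLindelof (univ : Set X) := by
  intro h
  obtain ⟨U, ⟨g, hgo, hgc, hgs, hgU⟩, hsub⟩ := exists_niceSet_superset h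
  have hU : U = univ := eq_univ_of_univ_subset hsub
  have gmono : Monotone g :=
    monotone_nat_of_le_succ fun n => subset_closure.trans (hgs n)
  obtain ⟨W, hW, hWd⟩ := hX (Set.range g) (by rintro W ⟨n, rfl⟩; exact hgo n)
    (by rw [sUnion_range, ← hgU, hU])
    (by
      rintro a ⟨i, rfl⟩ b ⟨j, rfl⟩ -
      rcases le_total i j with hij | hij
      · exact Or.inl (gmono hij)
      · exact Or.inr (gmono hij))
  obtain ⟨n, rfl⟩ := hW
  have hclo : closure (g n) = univ := dense_iff_closure_eq.mp hWd
  have hcn := hgc n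
  rw [hclo] at hcn
  exact hnc (isCompact_univ_iff.mp hcn)

end Aux

section ClosureLHC

variable {X : Type*} [TopologicalSpace X]

/-- In a linearly H-closed space, the closure of a nonempty open set is
linearly H-closed as a subspace. -/
lemma linearlyHClosed_closure (hX : LinearlyHClosed X) {U : Set X}
    (hU : IsOpen U) (hne : U.Nonempty) : LinearlyHClosed ↥(closure U) := by
  intro c hc hcov hchain
  let Z := closure U
  let w : Set ↥Z → Set X := fun V => ⋃₀ {W | IsOpen W ∧ (Subtype.val ⁻¹' W : Set ↥Z) ⊆ V}
  have hwopen : ∀ V, IsOpen (w V) := fun V => isOpen_sUnion fun W hW => hW.1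
  have hwmono : ∀ {V V'}, V ⊆ V' → w V ⊆ w V' := by
    intro V V' hVV'
    exact sUnion_subset_sUnion fun W hW => ⟨hW.1, hW.2.trans hVV'⟩
  have hwpre : ∀ V, (Subtype.val ⁻¹' (w V) : Set ↥Z) ⊆ V := by
    intro V z hz
    obtain ⟨W, hW, hzW⟩ := hz
    exact hW.2 hzW
  -- c is nonempty
  have hZne : Z.Nonempty := hne.closure
  obtain ⟨z0⟩ : Nonempty ↥Z := hZne.to_subtype
  have hz0 : z0 ∈ ⋃₀ c := by rw [hcov]; trivial
  obtain ⟨V0, hV0c, -⟩ := hz0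
  -- the chain `w '' c` covers X
  have hcover : ⋃₀ (w '' c) = univ := by
    apply eq_univ_of_forall
    intro x
    by_cases hx : x ∈ Z
    · have : (⟨x, hx⟩ : ↥Z) ∈ ⋃₀ c := by rw [hcov]; trivial
      obtain ⟨V, hVc, hxV⟩ := this
      obtain ⟨W, hWo, hWV⟩ := isOpen_induced_iff.mp (hc V hVc)
      refine ⟨w V, ⟨V, hVc, rfl⟩, ⟨W, ⟨hWo, hWV.le⟩, ?_⟩⟩
      show x ∈ W
      have : (⟨x, hx⟩ : ↥Z) ∈ Subtype.val ⁻¹' W := by rw [hWV]; exact hxV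
      exact this
    · refine ⟨w V0, ⟨V0, hV0c, rfl⟩, ⟨Zᶜ, ⟨isClosed_closure.isOpen_compl, ?_⟩, hx⟩⟩
      intro z hz
      exact absurd z.2 hz
  obtain ⟨W', hW'mem, hW'd⟩ := hX (w '' c) (by rintro W ⟨V, -, rfl⟩; exact hwopen V)
    hcover
    (by
      rintro a ⟨V, hV, rfl⟩ b ⟨V', hV', rfl⟩ -
      rcases hchain.total hV hV' with h | h
      · exact Or.inl (hwmono h)
      · exact Or.inr (hwmono h))
  obtain ⟨V, hVc, rfl⟩ := hW'mem
  refine ⟨V, hVc, ?_⟩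
  -- V is dense in Z
  rw [dense_iff_closure_eq]
  apply eq_univ_of_forall
  intro z
  rw [closure_subtype]
  have hUsub : U ⊆ closure (Subtype.val '' V) := by
    intro u hu
    have h1 : u ∈ closure (U ∩ w V) := hW'd.open_subset_closure_inter hU hu
    refine closure_mono ?_ h1
    rintro y ⟨hyU, hyw⟩
    have hyZ : y ∈ Z := subset_closure hyU
    exact ⟨⟨y, hyZ⟩, hwpre V hyw, rfl⟩
  have : Z ⊆ closure (Subtype.val '' V) :=
    closure_minimal hUsub isClosed_closure
  exact this z.2

end ClosureLHC

section Omega1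

/-- The transfinite iteration of a "step" operation on sets, taking unions at limits. -/
noncomputable def uSeq {X : Type*} (step : Set X → Set X) : Ordinal.{0} → Set X :=
  Ordinal.lt_wf.fix fun α ih => step (⋃ β : (Set.Iio α), ih β.1 β.2)

lemma uSeq_eq {X : Type*} (step : Set X → Set X) (α : Ordinal.{0}) :
    uSeq step α = step (⋃ β : (Set.Iio α), uSeq step β.1) :=
  Ordinal.lt_wf.fix_eq _ α

lemma countable_Iio_of_lt_omega1 (α : Ordinal.{0}) (h : α < (Cardinal.aleph 1).ord) :
    (Set.Iio α).Countable := by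
  rw [Cardinal.countable_iff_lt_aleph_one, Ordinal.mk_Iio_ordinal]
  have h1 : α.card < Cardinal.aleph 1 := Cardinal.lt_ord.mp h
  have := Cardinal.lift_lt.{0, 1}.mpr h1
  simpa using this

end Omega1

theorem loc_compact_countably_tight_lhc_noncompact {X : Type*} [TopologicalSpace X]
    [T2Space X] [WeaklyLocallyCompactSpace X]
    (hct : CountablyTight X) (hX : LinearlyHClosed X) (hnc : ¬ CompactSpace X) :
    ∃ U : Set X, IsOpen U ∧ IsSigmaCompact U ∧
      LinearlyHClosed ↥(closure U) ∧ ¬ LindelofSpace ↥(closure U) := by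
  by_cases hgood : ∃ U : Set X, NiceSet U ∧ ¬ IsLindelof (closure U)
  · obtain ⟨U, hU, hUL⟩ := hgood
    have hUne : U.Nonempty := by
      rcases U.eq_empty_or_nonempty with rfl | h
      · exact absurd (by simpa using (isLindelof_empty : IsLindelof (∅ : Set X))) hUL
      · exact h
    refine ⟨U, hU.isOpen, hU.isSigmaCompact, linearlyHClosed_closure hX hU.isOpen hUne, ?_⟩
    intro h
    exact hUL (isLindelof_iff_LindelofSpace.mpr h)
  -- contradiction branch
  · exfalso
    classical
    push_neg at hgood
    have hcon : ∀ U : Set X, NiceSet U → IsLindelof (closure U) := hgood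
    -- the step function
    have hstep : ∀ S : Set X, NiceSet S →
        ∃ T, NiceSet T ∧ closure S ⊆ T ∧ ∃ x ∈ T, x ∉ closure S := by
      intro S hS
      have hSL : IsLindelof (closure S) := hcon S hS
      have hne : closure S ≠ univ := by
        intro h
        rw [h] at hSL
        exact not_isLindelof_univ hX hnc hSL
      obtain ⟨x, hx⟩ : ∃ x, x ∉ closure S := by
        by_contra h
        push_neg at h
        exact hne (eq_univ_of_forall h)
      obtain ⟨T, hT, hLT⟩ := exists_niceSet_superset (hSL.insert x)
      exact ⟨T, hT, (subset_insert x (closure S)).trans hLT,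
        x, hLT (mem_insert x _), hx⟩
    choose Tf hTf1 hTf2 hTf3 using hstep
    set step : Set X → Set X := fun S => if h : NiceSet S then Tf S h else ∅ with hstepdef
    set u : Ordinal.{0} → Set X := uSeq step with hu
    set ω₁ : Ordinal.{0} := (Cardinal.aleph 1).ord with hω₁
    have hω₁lim : Order.IsSuccLimit ω₁ := Cardinal.isSuccLimit_ord (Cardinal.aleph0_le_aleph 1)
    -- the invariant
    have key : ∀ α : Ordinal.{0}, α < ω₁ → NiceSet (u α) ∧
        ∀ β < α, closure (u β) ⊆ u α ∧ ∃ x ∈ u α, x ∉ closure (u β) := by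
      intro α
      induction α using Ordinal.induction with
      | _ α ih =>
        intro hα
        set S : Set X := ⋃ β : (Set.Iio α), u β.1 with hS
        have hScount : Countable ↥(Set.Iio α) :=
          (countable_Iio_of_lt_omega1 α hα).to_subtype
        have hSnice : NiceSet S :=
          niceSet_iUnion fun β : ↥(Set.Iio α) => (ih β.1 β.2 (β.2.trans hα)).1
        have huα : u α = Tf S hSnice := by
          rw [hu, uSeq_eq, ← hS, hstepdef]
          simp only [dif_pos hSnice]
        constructor
        · rw [huα]; exact hTf1 S hSnice
        · intro β hβ
          have hβS : u β ⊆ S := subset_iUnion_of_subset ⟨β, hβ⟩ subset_rfl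
          have hclsub : closure (u β) ⊆ closure S := closure_mono hβS
          constructor
          · rw [huα]
            exact hclsub.trans (hTf2 S hSnice)
          · obtain ⟨x, hxT, hxS⟩ := hTf3 S hSnice
            exact ⟨x, by rw [huα]; exact hxT, fun hxc => hxS (hclsub hxc)⟩
    have mono : ∀ {β α : Ordinal.{0}}, β ≤ α → α < ω₁ → u β ⊆ u α := by
      intro β α hβα hα
      rcases lt_or_eq_of_le hβα with h | h
      · exact subset_closure.trans ((key α hα).2 β h).1
      · rw [h]
    -- Y is clopen
    set Y : Set X := ⋃ α : (Set.Iio ω₁), u α.1 with hY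
    have hYopen : IsOpen Y :=
      isOpen_iUnion fun α => ((key α.1 α.2).1).isOpen
    have hYclosed : IsClosed Y := by
      rw [← closure_subset_iff_isClosed]
      intro x hx
      obtain ⟨A, hAY, hAc, hxA⟩ := hct Y x hx
      rcases A.eq_empty_or_nonempty with rfl | hAne
      · simp at hxA
      obtain ⟨f, rfl⟩ := hAc.exists_eq_range hAne
      have hmemβ : ∀ n : ℕ, ∃ β : Ordinal.{0}, β < ω₁ ∧ f n ∈ u β := by
        intro n
        have : f n ∈ Y := hAY (mem_range_self n)
        obtain ⟨β, hβ⟩ := mem_iUnion.mp this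
        exact ⟨β.1, β.2, hβ⟩
      choose b hb1 hb2 using hmemβ
      set γ : Ordinal.{0} := iSup b with hγ
      have hγlt : γ < ω₁ := by
        rw [hγ, hω₁, Cardinal.ord_aleph]
        exact Ordinal.iSup_lt_omega_one (fun n => by have := hb1 n; rwa [hω₁, Cardinal.ord_aleph] at this)
      have hγ1 : Order.succ γ < ω₁ := hω₁lim.succ_lt hγlt
      have hγ2 : Order.succ (Order.succ γ) < ω₁ := hω₁lim.succ_lt hγ1
      have hAsub : range f ⊆ u (Order.succ γ) := by
        rintro y ⟨n, rfl⟩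
        have hble : b n ≤ γ := Ordinal.le_iSup b n
        exact mono (hble.trans (Order.le_succ γ)) hγ1 (hb2 n)
      have : x ∈ closure (u (Order.succ γ)) := closure_mono hAsub hxA
      have : x ∈ u (Order.succ (Order.succ γ)) :=
        ((key _ hγ2).2 _ (Order.lt_succ _)).1 this
      exact mem_iUnion.mpr ⟨⟨Order.succ (Order.succ γ), hγ2⟩, this⟩
    -- the chain cover
    set D : Set (Set X) := (fun α : Ordinal.{0} => u α ∪ Yᶜ) '' (Set.Iio ω₁) with hD
    have hDopen : ∀ W ∈ D, IsOpen W := by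
      rintro W ⟨α, hα, rfl⟩
      exact ((key α hα).1).isOpen.union hYclosed.isOpen_compl
    have hDcov : ⋃₀ D = univ := by
      apply eq_univ_of_forall
      intro x
      by_cases hx : x ∈ Y
      · obtain ⟨α, hα⟩ := mem_iUnion.mp hx
        exact ⟨u α.1 ∪ Yᶜ, ⟨α.1, α.2, rfl⟩, Or.inl hα⟩
      · refine ⟨u 0 ∪ Yᶜ, ⟨0, hω₁lim.pos, rfl⟩, Or.inr hx⟩
    have hDchain : IsChain (· ⊆ ·) D := by
      rintro a ⟨α, hα, rfl⟩ b ⟨β, hβ, rfl⟩ -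
      rcases le_total α β with h | h
      · exact Or.inl (union_subset_union_left _ (mono h hβ))
      · exact Or.inr (union_subset_union_left _ (mono h hα))
    obtain ⟨W, hWD, hWd⟩ := hX D hDopen hDcov hDchain
    obtain ⟨α, hα, rfl⟩ := hWD
    have hdense : closure (u α) ∪ Yᶜ = univ := by
      have := dense_iff_closure_eq.mp hWd
      rwa [closure_union, hYopen.isClosed_compl.closure_eq] at this
    have hYsub : Y ⊆ closure (u α) := by
      intro y hy
      rcases (eq_univ_iff_forall.mp hdense y) with h | h
      · exact h
      · exact absurd hy h
    have hα1 : Order.succ α < ω₁ := hω₁lim.succ_lt hα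
    have hα2 : Order.succ (Order.succ α) < ω₁ := hω₁lim.succ_lt hα1
    obtain ⟨x, hxmem, hxnot⟩ := ((key _ hα2).2 _ (Order.lt_succ _)).2
    apply hxnot
    have hxY : x ∈ Y := mem_iUnion.mpr ⟨⟨Order.succ (Order.succ α), hα2⟩, hxmem⟩
    exact closure_mono (mono (Order.le_succ α) hα1) (hYsub hxY)
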